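/- (Lemma 5, gauge equivalence of the Fuchsian system with the hypergeometric equation.) Let α, β, γ, r ∈ ℂ with α ≠ β, α ≠ 0, α + 1 − γ ≠ 0 and r ≠ 0, and let B0 := [[α(1+β−γ)/(α−β), α(γ−α−1)r/(α−β)],[β(β+1−γ)/((α−β)r), β(γ−α−1)/(α−β)]] and B1 := [[α(γ−α−1)/(α−β), −α(γ−α−1)r/(α−β)],[−β(β+1−γ)/((α−β)r), β(β+1−γ)/(α−β)]]. Let U ⊆ ℂ ∖ {0, 1} be open and let y : U → ℂ be twice differentiable and satisfy the Gauss hypergeometric equation with parameters α0 = α, β0 = β+1, γ0 = γ, i.e. z(1−z)·y'' + (γ − (α+β+2)z)·y' − α(β+1)·y = 0 on U. Then the vector function X(z) := (y(z), X2(z)), where X2(z) := ((α−β)/(α(α+1−γ)r))·[(α·z + α(1+β−γ)/(α−β))·y(z) + z(z−1)·y'(z)], satisfies the Fuchsian system X'(z) = (B0/z + B1/(z−1))·X(z) on U. In particular the system with residue matrices B0, B1 and the hypergeometric equation have the same singular points 0, 1, ∞. -/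

import Mathlib

open Matrix

noncomputable section

/-- The residue matrix `B₀` of Lemma 4. -/
def LB0 (α β γ r : ℂ) : Matrix (Fin 2) (Fin 2) ℂ :=
  !![α * (1 + β - γ) / (α - β), α * (γ - α - 1) * r / (α - β);
     β * (β + 1 - γ) / ((α - β) * r), β * (γ - α - 1) / (α - β)]

/-- The residue matrix `B₁` of Lemma 4. -/
def LB1 (α β γ r : ℂ) : Matrix (Fin 2) (Fin 2) ℂ :=
  !![α * (γ - α - 1) / (α - β), -(α * (γ - α - 1) * r / (α - β));
     -(β * (β + 1 - γ) / ((α - β) * r)), β * (β + 1 - γ) / (α - β)]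

/-- The second component of the gauge-transformed vector `X = G(z)Ψ` of Lemma 5. -/
def X2fun (α β γ r : ℂ) (y : ℂ → ℂ) : ℂ → ℂ := fun z =>
  ((α - β) / (α * (α + 1 - γ) * r)) *
    ((α * z + α * (1 + β - γ) / (α - β)) * y z + z * (z - 1) * deriv y z)

set_option maxHeartbeats 1600000 in
/-- **Lemma 5** (gauge equivalence of the Fuchsian system with the hypergeometric
equation): if `y` solves the hypergeometric equation with parameters
`α₀ = α, β₀ = β + 1, γ₀ = γ`, then `X = (y, X₂)` solves the Fuchsian system
`X' = (B₀/z + B₁/(z−1))X`. -/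
theorem lemma5_gauge_equivalence
    (α β γ r : ℂ) (hαβ : α ≠ β) (hα : α ≠ 0) (hγ : α + 1 - γ ≠ 0) (hr : r ≠ 0)
    (U : Set ℂ) (hU : IsOpen U) (hU' : ∀ z ∈ U, z ≠ 0 ∧ z ≠ 1)
    (y : ℂ → ℂ)
    (hy : ∀ z ∈ U, DifferentiableAt ℂ y z ∧ DifferentiableAt ℂ (deriv y) z)
    (hhyp : ∀ z ∈ U,
      z * (1 - z) * deriv (deriv y) z + (γ - (α + β + 2) * z) * deriv y z
        - α * (β + 1) * y z = 0) :
    ∀ z ∈ U,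
      deriv y z
        = (LB0 α β γ r 0 0 / z + LB1 α β γ r 0 0 / (z - 1)) * y z
          + (LB0 α β γ r 0 1 / z + LB1 α β γ r 0 1 / (z - 1)) * X2fun α β γ r y z ∧
      deriv (X2fun α β γ r y) z
        = (LB0 α β γ r 1 0 / z + LB1 α β γ r 1 0 / (z - 1)) * y z
          + (LB0 α β γ r 1 1 / z + LB1 α β γ r 1 1 / (z - 1)) * X2fun α β γ r y z := by
  intro z hz
  obtain ⟨hz0, hz1⟩ := hU' z hz
  have hz1' : z - 1 ≠ 0 := sub_ne_zero.mpr hz1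
  have hz1'' : (1 : ℂ) - z ≠ 0 := sub_ne_zero.mpr (Ne.symm hz1)
  have hab : α - β ≠ 0 := sub_ne_zero.mpr hαβ
  obtain ⟨hy1, hy2⟩ := hy z hz
  have hode := hhyp z hz
  have hD2 : deriv (deriv y) z
      = (α * (β + 1) * y z - (γ - (α + β + 2) * z) * deriv y z) / (z * (1 - z)) := by
    field_simp
    linear_combination hode
  have hX2 : HasDerivAt (X2fun α β γ r y)
      (((α - β) / (α * (α + 1 - γ) * r)) *
        ((α * 1 * y z + (α * z + α * (1 + β - γ) / (α - β)) * deriv y z)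
          + ((1 * (z - 1) + z * 1) * deriv y z + z * (z - 1) * deriv (deriv y) z))) z := by
    have h1 : HasDerivAt (fun w => (α * w + α * (1 + β - γ) / (α - β)) * y w)
        (α * 1 * y z + (α * z + α * (1 + β - γ) / (α - β)) * deriv y z) z :=
      (((hasDerivAt_id z).const_mul α).add_const _).mul hy1.hasDerivAt
    have h2 : HasDerivAt (fun w => w * (w - 1) * deriv y w)
        ((1 * (z - 1) + z * 1) * deriv y z + z * (z - 1) * deriv (deriv y) z) z :=
      ((hasDerivAt_id z).mul ((hasDerivAt_id z).sub_const 1)).mul hy2.hasDerivAt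
    exact (h1.add h2).const_mul _
  have hDX2 := hX2.deriv
  -- auxiliary atomic variable
  obtain ⟨v, hv_def⟩ : ∃ v : ℂ, v = (γ - α - 1) / (α - β) := ⟨_, rfl⟩
  have hγ' : γ - α - 1 ≠ 0 := by
    intro h; exact hγ (by linear_combination -h)
  have hv : v ≠ 0 := hv_def ▸ div_ne_zero hγ' hab
  have hv2 : v * (α - β) = γ - α - 1 := by
    rw [hv_def]; exact div_mul_cancel₀ _ hab
  have h1 : α * (1 + β - γ) / (α - β) = α * (-1 - v) := by
    rw [div_eq_iff hab]; linear_combination α * hv2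
  have h2 : α * (γ - α - 1) / (α - β) = α * v := by
    rw [div_eq_iff hab]; linear_combination (-α) * hv2
  have h3 : α * (γ - α - 1) * r / (α - β) = α * v * r := by
    rw [div_eq_iff hab]; linear_combination (-(α * r)) * hv2
  have h4 : β * (β + 1 - γ) / ((α - β) * r) = β * (-1 - v) / r := by
    rw [div_eq_div_iff (mul_ne_zero hab hr) hr]; linear_combination (β * r) * hv2
  have h5 : β * (γ - α - 1) / (α - β) = β * v := by
    rw [div_eq_iff hab]; linear_combination (-β) * hv2
  have h6 : β * (β + 1 - γ) / (α - β) = β * (-1 - v) := by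
    rw [div_eq_iff hab]; linear_combination β * hv2
  have h7 : (α - β) / (α * (α + 1 - γ) * r) = -(1 / (α * v * r)) := by
    rw [show -(1 / (α * v * r)) = (-1) / (α * v * r) by rw [neg_div],
      div_eq_div_iff (by exact mul_ne_zero (mul_ne_zero hα hγ) hr)
        (mul_ne_zero (mul_ne_zero hα hv) hr)]
    linear_combination (α * r) * hv2
  have h8 : γ = α + 1 + v * (α - β) := by linear_combination -hv2
  constructor
  · simp only [LB0, LB1, X2fun, Matrix.cons_val_zero, Matrix.cons_val_one, Matrix.head_cons,
      Matrix.cons_val', Matrix.head_fin_const, Matrix.empty_val', Matrix.cons_val_fin_one,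
      Matrix.of_apply]
    rw [h1, h2, h3, h7]
    rw [div_add_div _ _ hz0 hz1', div_add_div _ _ hz0 hz1']
    field_simp
    ring
  · rw [hDX2, hD2]
    simp only [LB0, LB1, X2fun, Matrix.cons_val_zero, Matrix.cons_val_one, Matrix.head_cons,
      Matrix.cons_val', Matrix.head_fin_const, Matrix.empty_val', Matrix.cons_val_fin_one,
      Matrix.of_apply]
    rw [h1, h4, h5, h6, h7]
    rw [h8]
    rw [div_add_div _ _ hz0 hz1', div_add_div _ _ hz0 hz1']
    field_simp
    ring
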